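/- Let H ⊂ ℂ^n be the zero set of a real-analytic function ρ near a point p ∈ H at which H is a smooth real hypersurface of the form {Im z_1 = 0} in suitable local holomorphic coordinates centered at p. Then any holomorphic function f defined near p with f(p) = 0 and {f = 0} ⊆ H must vanish identically on {z_1 = 0}; i.e., the germ of a complex hypervariety through p contained in H is unique and equals the leaf {z_1 = 0}. -/

import Mathlib

open Complex Metric MeasureTheory intervalIntegral Set Filter

/-- An interval integral (over `[0, 2π]`) of a jointly continuous family of functions,
holomorphic in the parameter, is holomorphic in the parameter. -/
lemma lemC {T : Set ℂ} (hT : IsOpen T) (G : ℝ → ℂ → ℂ)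
    (hc : ContinuousOn (fun p : ℝ × ℂ => G p.1 p.2) ((Set.univ : Set ℝ) ×ˢ T))
    (hd : ∀ θ : ℝ, DifferentiableOn ℂ (G θ) T) :
    DifferentiableOn ℂ (fun t => ∫ θ in (0:ℝ)..(2*Real.pi), G θ t) T := by
  intro t₀ ht₀
  have hcont : ∀ t ∈ T, Continuous (fun θ : ℝ => G θ t) := by
    intro t ht
    have hmap : Continuous (fun θ : ℝ => ((θ, t) : ℝ × ℂ)) :=
      continuous_id.prodMk continuous_const
    rw [← continuousOn_univ]
    exact hc.comp hmap.continuousOn (fun θ _ => ⟨trivial, ht⟩)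
  suffices h : DifferentiableAt ℂ (fun t => ∫ θ in (0:ℝ)..(2*Real.pi), G θ t) t₀ from
    h.differentiableWithinAt
  obtain ⟨ε', hε', hball⟩ := Metric.isOpen_iff.1 hT t₀ ht₀
  set ε : ℝ := ε' / 3 with hεdef
  have hε0 : 0 < ε := by positivity
  have hsub : closedBall t₀ (2 * ε) ⊆ T := by
    intro x hx
    apply hball
    rw [mem_closedBall] at hx
    rw [mem_ball]
    linarith
  have hsubT : ∀ x ∈ ball t₀ ε, x ∈ T := fun x hx =>
    hsub (closedBall_subset_closedBall (by linarith) (ball_subset_closedBall hx))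
  have hK : IsCompact ((Set.Icc (0:ℝ) (2*Real.pi)) ×ˢ closedBall t₀ (2*ε)) :=
    isCompact_Icc.prod (isCompact_closedBall _ _)
  obtain ⟨M, hM⟩ := hK.exists_bound_of_continuousOn
    (hc.mono (Set.prod_mono (Set.subset_univ _) hsub))
  -- the sequence of slopes, for measurability of the derivative
  have hdat : ∀ t ∈ T, ∀ θ : ℝ, HasDerivAt (G θ) (deriv (G θ) t) t := fun t ht θ =>
    (((hd θ) t ht).differentiableAt (hT.mem_nhds ht)).hasDerivAt
  have hF'_meas : AEStronglyMeasurable (fun θ => deriv (G θ) t₀)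
      (MeasureTheory.volume.restrict (Set.uIoc (0:ℝ) (2*Real.pi))) := by
    apply aestronglyMeasurable_of_tendsto_ae (f := fun (n : ℕ) (θ : ℝ) =>
      slope (G θ) t₀ (t₀ + (ε / (n+2) : ℝ))) Filter.atTop
    · intro n
      have h1 : t₀ + (ε / (n+2) : ℝ) ∈ T := by
        apply hsubT
        rw [mem_ball, dist_eq_norm]
        have h2 : (0:ℝ) < ε / (n+2) := by positivity
        have h3 : ε / (n+2) < ε := by
          rw [div_lt_iff₀ (by positivity)]
          nlinarith
        simp only [add_sub_cancel_left]
        rw [Complex.norm_real, Real.norm_eq_abs, abs_of_pos h2]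
        exact h3
      have : Continuous fun θ => slope (G θ) t₀ (t₀ + (ε / (n+2) : ℝ)) := by
        simp only [slope_def_field]
        exact ((hcont _ h1).sub (hcont _ ht₀)).div_const _
      exact this.aestronglyMeasurable
    · apply Filter.Eventually.of_forall
      intro θ
      have hda := hdat t₀ ht₀ θ
      rw [hasDerivAt_iff_tendsto_slope] at hda
      apply hda.comp
      apply tendsto_nhdsWithin_of_tendsto_nhds_of_eventually_within
      · have hnat : Filter.Tendsto (fun n : ℕ => ((n:ℝ) + 2)) Filter.atTop Filter.atTop :=
          Filter.tendsto_atTop_add_const_right _ 2 tendsto_natCast_atTop_atTop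
        have : Filter.Tendsto (fun n : ℕ => (ε / (n+2) : ℝ)) Filter.atTop (nhds 0) :=
          Filter.Tendsto.div_atTop tendsto_const_nhds hnat
        have := ((Complex.continuous_ofReal.tendsto 0).comp this).const_add t₀
        simpa using this
      · apply Filter.Eventually.of_forall
        intro n
        simp only [Set.mem_compl_iff, Set.mem_singleton_iff]
        intro h
        have h2 : (0:ℝ) < ε / (n+2) := by positivity
        have := add_eq_left.mp h
        rw [Complex.ofReal_eq_zero] at this
        linarith
  have key := intervalIntegral.hasDerivAt_integral_of_dominated_loc_of_deriv_le
    (F := fun t θ => G θ t) (F' := fun t θ => deriv (G θ) t) (x₀ := t₀)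
    (bound := fun _ => M / ε) (a := 0) (b := 2*Real.pi) (μ := MeasureTheory.volume) (ball_mem_nhds t₀ hε0)
    ?_ ?_ hF'_meas ?_ ?_ ?_
  · exact key.2.differentiableAt
  · filter_upwards [hT.mem_nhds ht₀] with x hx
    exact (hcont x hx).aestronglyMeasurable
  · exact (hcont t₀ ht₀).intervalIntegrable _ _
  · apply Filter.Eventually.of_forall
    intro θ hθ x hx
    have hxT : x ∈ T := hsubT x hx
    have hcb : closedBall x ε ⊆ T := fun y hy => hsub <| by
      rw [mem_closedBall] at hy ⊢
      calc dist y t₀ ≤ dist y x + dist x t₀ := dist_triangle _ _ _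
        _ ≤ ε + ε := add_le_add hy (le_of_lt hx)
        _ = 2 * ε := by ring
    show ‖deriv (G θ) x‖ ≤ M / ε
    rw [← Complex.cderiv_eq_deriv hT (hd θ) hε0 hcb]
    apply Complex.norm_cderiv_le hε0
    intro w hw
    apply hM (θ, w)
    constructor
    · rw [Set.uIoc_of_le Real.two_pi_pos.le] at hθ
      exact ⟨hθ.1.le, hθ.2⟩
    · rw [mem_sphere] at hw
      rw [mem_closedBall]
      calc dist w t₀ ≤ dist w x + dist x t₀ := dist_triangle _ _ _
        _ ≤ ε + ε := add_le_add hw.le hx.le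
        _ = 2 * ε := by ring
  · exact intervalIntegrable_const
  · apply Filter.Eventually.of_forall
    intro θ _ x hx
    exact hdat x (hsubT x hx) θ


lemma lemD {S : Set (ℂ × ℂ)} (hS : IsCompact S) (G : ℝ → ℂ × ℂ → ℂ)
    (hc : ContinuousOn (fun p : ℝ × (ℂ × ℂ) => G p.1 p.2) ((Set.univ : Set ℝ) ×ˢ S)) :
    ContinuousOn (fun x => ∫ θ in (0:ℝ)..(2*Real.pi), G θ x) S := by
  have hcθ : ∀ x ∈ S, Continuous (fun θ : ℝ => G θ x) := by
    intro x hx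
    have hmap : Continuous (fun θ : ℝ => ((θ, x) : ℝ × (ℂ × ℂ))) :=
      continuous_id.prodMk continuous_const
    rw [← continuousOn_univ]
    exact hc.comp hmap.continuousOn (fun θ _ => ⟨trivial, hx⟩)
  intro x₀ hx₀
  rw [Metric.continuousWithinAt_iff]
  intro ε hε
  set K : Set (ℝ × (ℂ × ℂ)) := (Set.Icc (0:ℝ) (2*Real.pi)) ×ˢ S with hK
  have hKc : IsCompact K := isCompact_Icc.prod hS
  have huc : UniformContinuousOn (fun p : ℝ × (ℂ × ℂ) => G p.1 p.2) K :=
    hKc.uniformContinuousOn_of_continuous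
      (hc.mono (Set.prod_mono (Set.subset_univ _) (le_refl S)))
  rw [Metric.uniformContinuousOn_iff] at huc
  obtain ⟨δ, hδ0, hδ⟩ := huc (ε / (2 * Real.pi + 1)) (by positivity)
  refine ⟨δ, hδ0, fun {x} hx hdist => ?_⟩
  have hbound : ∀ θ ∈ Set.Icc (0:ℝ) (2*Real.pi), ‖G θ x - G θ x₀‖ ≤ ε / (2 * Real.pi + 1) := by
    intro θ hθ
    have h1 : ((θ, x) : ℝ × (ℂ × ℂ)) ∈ K := ⟨hθ, hx⟩
    have h2 : ((θ, x₀) : ℝ × (ℂ × ℂ)) ∈ K := ⟨hθ, hx₀⟩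
    have h3 : dist ((θ, x) : ℝ × (ℂ × ℂ)) (θ, x₀) < δ := by
      rw [Prod.dist_eq]
      simp only [dist_self]
      simp only [max_eq_right dist_nonneg]
      exact lt_of_le_of_lt (le_max_right 0 (dist x x₀)) (max_lt hδ0 hdist)
    have := hδ _ h1 _ h2 h3
    rw [dist_eq_norm] at this
    exact this.le
  have hint1 : IntervalIntegrable (fun θ => G θ x) MeasureTheory.volume 0 (2*Real.pi) :=
    (hcθ x hx).intervalIntegrable _ _
  have hint2 : IntervalIntegrable (fun θ => G θ x₀) MeasureTheory.volume 0 (2*Real.pi) :=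
    (hcθ x₀ hx₀).intervalIntegrable _ _
  rw [dist_eq_norm, ← intervalIntegral.integral_sub hint1 hint2]
  have hb := intervalIntegral.norm_integral_le_of_norm_le_const
    (C := ε / (2 * Real.pi + 1)) (a := 0) (b := 2*Real.pi)
    (f := fun θ => G θ x - G θ x₀) ?_
  · calc ‖∫ θ in (0:ℝ)..(2*Real.pi), (G θ x - G θ x₀)‖
        ≤ ε / (2 * Real.pi + 1) * |2*Real.pi - 0| := hb
      _ = |2*Real.pi - 0| * (ε / (2 * Real.pi + 1)) := mul_comm _ _
      _ < ε := by
          rw [sub_zero, abs_of_pos Real.two_pi_pos]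
          rw [div_eq_inv_mul, ← mul_assoc]
          have h2π : (0:ℝ) < 2 * Real.pi + 1 := by positivity
          calc 2*Real.pi * (2*Real.pi+1)⁻¹ * ε < 1 * ε := by
                apply mul_lt_mul_of_pos_right _ hε
                rw [mul_inv_lt_iff₀ h2π]
                linarith
            _ = ε := one_mul ε
  · intro θ hθ
    apply hbound
    rw [Set.uIoc_of_le Real.two_pi_pos.le] at hθ
    exact ⟨hθ.1.le, hθ.2⟩


lemma circleIntegral_add' {f g : ℂ → ℂ} {c : ℂ} {R : ℝ} (hf : CircleIntegrable f c R)
    (hg : CircleIntegrable g c R) :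
    (∮ z in C(c, R), (f z + g z)) = (∮ z in C(c, R), f z) + ∮ z in C(c, R), g z := by
  simp only [circleIntegral, smul_add, intervalIntegral.integral_add hf.out hg.out]

lemma zeroSetFinite {R r : ℝ} (hrR : r < R) {g : ℂ → ℂ}
    (hg : DifferentiableOn ℂ g (ball 0 R))
    (hnz : ∃ z₀ ∈ ball (0:ℂ) R, g z₀ ≠ 0) :
    {z : ℂ | z ∈ closedBall (0:ℂ) r ∧ g z = 0}.Finite := by
  have han : AnalyticOnNhd ℂ g (ball 0 R) := hg.analyticOnNhd isOpen_ball
  have hsub : closedBall (0:ℂ) r ⊆ ball 0 R := closedBall_subset_ball hrR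
  have hne : ∀ z ∈ closedBall (0:ℂ) r, ∀ᶠ y in nhdsWithin z {z}ᶜ, g y ≠ 0 := by
    intro z hz
    rcases (han z (hsub hz)).eventually_eq_zero_or_eventually_ne_zero with h | h
    · exfalso
      obtain ⟨z₀, hz₀, hgz₀⟩ := hnz
      exact hgz₀ (han.eqOn_zero_of_preconnected_of_eventuallyEq_zero
        (convex_ball 0 R).isPreconnected (hsub hz) h hz₀)
    · exact h
  set Z := {z : ℂ | z ∈ closedBall (0:ℂ) r ∧ g z = 0} with hZ
  by_contra hinf
  have hinf' : Z.Infinite := hinf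
  set u : ℕ → ℂ := fun n => ((hinf'.natEmbedding) n : ℂ) with hu
  have huinj : Function.Injective u :=
    Subtype.coe_injective.comp (hinf'.natEmbedding).injective
  have huZ : ∀ n, u n ∈ Z := fun n => ((hinf'.natEmbedding) n).2
  obtain ⟨a, ha, φ, hφ, hconv⟩ := (isCompact_closedBall (0:ℂ) r).tendsto_subseq
    (fun n => (huZ n).1)
  have hev := hne a ha
  rw [Filter.eventually_iff, mem_nhdsWithin] at hev
  obtain ⟨s, hsopen, has, hs⟩ := hev
  have : ∀ᶠ n in Filter.atTop, u (φ n) ∈ s := hconv (hsopen.mem_nhds has)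
  obtain ⟨N, hN⟩ := Filter.eventually_atTop.1 this
  have heq : ∀ n ≥ N, u (φ n) = a := by
    intro n hn
    by_contra hne'
    exact hs ⟨hN n hn, hne'⟩ (huZ (φ n)).2
  have h1 : u (φ N) = u (φ (N + 1)) := by
    rw [heq N le_rfl, heq (N+1) (by omega)]
  exact absurd (hφ.injective (huinj h1)) (by omega)

lemma argPrinciple {R r : ℝ} (hr : 0 < r) (hrR : r < R) :
    ∀ N : ℕ, ∀ g : ℂ → ℂ, DifferentiableOn ℂ g (ball 0 R) →
      (∀ z ∈ sphere (0:ℂ) r, g z ≠ 0) →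
      {z : ℂ | z ∈ closedBall (0:ℂ) r ∧ g z = 0}.ncard ≤ N →
      ∃ M : Multiset ℂ,
        (∀ ζ ∈ M, ζ ∈ ball (0:ℂ) r ∧ g ζ = 0) ∧
        (∀ z ∈ closedBall (0:ℂ) r, g z = 0 → z ∈ M) ∧
        ∀ c : ℕ, (∮ z in C((0:ℂ), r), z ^ c * (deriv g z / g z))
            = (2 * Real.pi * I) * ((M.map (· ^ c)).sum) := by
  have hsphere_ball : sphere (0:ℂ) r ⊆ ball (0:ℂ) R := sphere_subset_closedBall.trans
    (closedBall_subset_ball hrR)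
  have hcb_ball : closedBall (0:ℂ) r ⊆ ball (0:ℂ) R := closedBall_subset_ball hrR
  -- base helper: if no zeros in the closed ball, all integrals vanish
  have base : ∀ g : ℂ → ℂ, DifferentiableOn ℂ g (ball 0 R) →
      (∀ z ∈ closedBall (0:ℂ) r, g z ≠ 0) →
      ∀ c : ℕ, (∮ z in C((0:ℂ), r), z ^ c * (deriv g z / g z)) = 0 := by
    intro g hg hnz c
    have han : AnalyticOnNhd ℂ g (ball 0 R) := hg.analyticOnNhd isOpen_ball
    have hdercont : ContinuousOn (deriv g) (ball 0 R) := han.deriv.continuousOn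
    apply Complex.circleIntegral_eq_zero_of_differentiable_on_off_countable hr.le
      Set.countable_empty
    · apply ContinuousOn.mul (continuousOn_pow c)
      apply ContinuousOn.div (hdercont.mono hcb_ball) (hg.continuousOn.mono hcb_ball) hnz
    · intro z hz
      rw [Set.diff_empty] at hz
      have hz' : z ∈ ball (0:ℂ) R := (ball_subset_ball hrR.le) hz
      have h1 : DifferentiableAt ℂ g z := hg.differentiableAt (isOpen_ball.mem_nhds hz')
      have h2 : DifferentiableAt ℂ (deriv g) z :=
        (han.deriv z hz').differentiableAt
      exact (differentiableAt_pow c).mul (h2.div h1 (hnz z (ball_subset_closedBall hz)))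
  intro N
  induction N with
  | zero =>
    intro g hg hsp hcard
    have hfin := zeroSetFinite hrR hg ⟨(r:ℂ), by
      simpa [mem_ball, dist_eq_norm] using lt_of_le_of_lt (le_of_eq (by simp [abs_of_pos hr])) hrR,
      hsp (r:ℂ) (by simp [mem_sphere, dist_eq_norm, abs_of_pos hr])⟩
    have hempty : {z : ℂ | z ∈ closedBall (0:ℂ) r ∧ g z = 0} = ∅ := by
      rw [← Set.ncard_eq_zero hfin]
      omega
    have hnz : ∀ z ∈ closedBall (0:ℂ) r, g z ≠ 0 := by
      intro z hz hgz
      have : z ∈ {z : ℂ | z ∈ closedBall (0:ℂ) r ∧ g z = 0} := ⟨hz, hgz⟩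
      rw [hempty] at this
      exact this
    exact ⟨0, by simp, fun z hz hgz => absurd hgz (hnz z hz), fun c => by
      simpa using base g hg hnz c⟩
  | succ N ih =>
    intro g hg hsp hcard
    have han : AnalyticOnNhd ℂ g (ball 0 R) := hg.analyticOnNhd isOpen_ball
    set Z := {z : ℂ | z ∈ closedBall (0:ℂ) r ∧ g z = 0} with hZdef
    have hfin : Z.Finite := zeroSetFinite hrR hg ⟨(r:ℂ), by
      simpa [mem_ball, dist_eq_norm] using lt_of_le_of_lt (le_of_eq (by simp [abs_of_pos hr])) hrR,
      hsp (r:ℂ) (by simp [mem_sphere, dist_eq_norm, abs_of_pos hr])⟩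
    by_cases hZe : Z = ∅
    · have hnz : ∀ z ∈ closedBall (0:ℂ) r, g z ≠ 0 := by
        intro z hz hgz
        have : z ∈ Z := ⟨hz, hgz⟩
        rw [hZe] at this
        exact this
      exact ⟨0, by simp, fun z hz hgz => absurd hgz (hnz z hz), fun c => by
        simpa using base g hg hnz c⟩
    · obtain ⟨ζ, hζZ⟩ := Set.nonempty_iff_ne_empty.2 hZe
      obtain ⟨hζcb, hζg⟩ := hζZ
      have hζball : ζ ∈ ball (0:ℂ) r := by
        rcases lt_or_eq_of_le (mem_closedBall.1 hζcb) with h | h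
        · exact mem_ball.2 h
        · exact absurd (hsp ζ (mem_sphere.2 h)) (by simp [hζg])
      have hζR : ζ ∈ ball (0:ℂ) R := hcb_ball hζcb
      have hζa : AnalyticAt ℂ g ζ := han ζ hζR
      -- g is not eventually zero at ζ
      have hnev : ¬ (∀ᶠ z in nhds ζ, g z = 0) := by
        intro h
        have := han.eqOn_zero_of_preconnected_of_eventuallyEq_zero
          (convex_ball (0:ℂ) R).isPreconnected hζR h
        exact hsp (r:ℂ) (by simp [mem_sphere, dist_eq_norm, abs_of_pos hr])
          (this (hsphere_ball (by simp [mem_sphere, dist_eq_norm, abs_of_pos hr])))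
      have horder_ne_top : analyticOrderAt g ζ ≠ ⊤ := fun h => hnev (analyticOrderAt_eq_top.1 h)
      set k : ℕ := (analyticOrderAt g ζ).toNat with hkdef
      have horder : analyticOrderAt g ζ = (k : ℕ∞) := (ENat.coe_toNat horder_ne_top).symm
      obtain ⟨h₀, h₀a, h₀ne, hev⟩ := hζa.analyticOrderAt_eq_natCast.1 horder
      have hk0 : k ≠ 0 := by
        intro hk
        apply h₀ne
        have := hev.self_of_nhds
        rw [hk, pow_zero, one_smul] at this
        rw [← this, hζg]
      -- the global quotient
      set g₁ : ℂ → ℂ := fun z => if z = ζ then h₀ ζ else g z / (z - ζ)^k with hg₁def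
      have hfac : ∀ z : ℂ, g z = (z - ζ)^k * g₁ z := by
        intro z
        by_cases hz : z = ζ
        · subst hz
          simp [hg₁def, sub_self, zero_pow hk0, hζg]
        · simp only [hg₁def, if_neg hz]
          rw [mul_div_cancel₀]
          exact pow_ne_zero _ (sub_ne_zero.2 hz)
      have hg₁ev : g₁ =ᶠ[nhds ζ] h₀ := by
        filter_upwards [hev] with y hy
        by_cases hyζ : y = ζ
        · subst hyζ; simp [hg₁def]
        · simp only [hg₁def, if_neg hyζ, hy, smul_eq_mul]
          rw [mul_div_cancel_left₀]
          exact pow_ne_zero _ (sub_ne_zero.2 hyζ)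
      have hg₁diff : DifferentiableOn ℂ g₁ (ball 0 R) := by
        intro z hz
        by_cases hzζ : z = ζ
        · subst hzζ
          exact ((hg₁ev.differentiableAt_iff).2 h₀a.differentiableAt).differentiableWithinAt
        · have hevq : g₁ =ᶠ[nhds z] fun y => g y / (y - ζ)^k := by
            filter_upwards [eventually_ne_nhds hzζ] with y hy
            simp [hg₁def, if_neg hy]
          have hq : DifferentiableAt ℂ (fun y => g y / (y - ζ)^k) z := by
            apply DifferentiableAt.div
            · exact hg.differentiableAt (isOpen_ball.mem_nhds hz)
            · exact (differentiableAt_id.sub_const ζ).pow k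
            · exact pow_ne_zero _ (sub_ne_zero.2 hzζ)
          exact ((hevq.differentiableAt_iff).2 hq).differentiableWithinAt
      have hg₁ζ : g₁ ζ = h₀ ζ := by simp [hg₁def]
      have hg₁sp : ∀ z ∈ sphere (0:ℂ) r, g₁ z ≠ 0 := by
        intro z hz hg₁z
        apply hsp z hz
        rw [hfac z, hg₁z, mul_zero]
      -- new zero set
      have hZ₁ : {z : ℂ | z ∈ closedBall (0:ℂ) r ∧ g₁ z = 0} = Z \ {ζ} := by
        ext z
        simp only [Set.mem_setOf_eq, Set.mem_diff, Set.mem_singleton_iff, hZdef]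
        constructor
        · rintro ⟨hz, hg₁z⟩
          have hzζ : z ≠ ζ := by
            intro h; subst h
            rw [hg₁ζ] at hg₁z
            exact h₀ne hg₁z
          exact ⟨⟨hz, by rw [hfac z, hg₁z, mul_zero]⟩, hzζ⟩
        · rintro ⟨⟨hz, hgz⟩, hzζ⟩
          refine ⟨hz, ?_⟩
          have := hfac z
          rw [hgz] at this
          rcases mul_eq_zero.1 this.symm with h | h
          · exact absurd h (pow_ne_zero _ (sub_ne_zero.2 hzζ))
          · exact h
      have hcard₁ : {z : ℂ | z ∈ closedBall (0:ℂ) r ∧ g₁ z = 0}.ncard ≤ N := by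
        rw [hZ₁]
        have := Set.ncard_diff_singleton_lt_of_mem (s := Z) (a := ζ) ⟨hζcb, hζg⟩ hfin
        omega
      obtain ⟨M₁, hM₁mem, hM₁cov, hM₁int⟩ := ih g₁ hg₁diff hg₁sp hcard₁
      refine ⟨Multiset.replicate k ζ + M₁, ?_, ?_, ?_⟩
      · intro ξ hξ
        rcases Multiset.mem_add.1 hξ with h | h
        · rw [Multiset.eq_of_mem_replicate h]
          exact ⟨hζball, hζg⟩
        · obtain ⟨hb, hz⟩ := hM₁mem ξ h
          exact ⟨hb, by rw [hfac ξ, hz, mul_zero]⟩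
      · intro z hz hgz
        by_cases hzζ : z = ζ
        · subst hzζ
          exact Multiset.mem_add.2 (Or.inl (Multiset.mem_replicate.2 ⟨hk0, rfl⟩))
        · apply Multiset.mem_add.2 (Or.inr _)
          apply hM₁cov z hz
          have := hfac z
          rw [hgz] at this
          rcases mul_eq_zero.1 this.symm with h | h
          · exact absurd h (pow_ne_zero _ (sub_ne_zero.2 hzζ))
          · exact h
      · intro c
        have han₁ : AnalyticOnNhd ℂ g₁ (ball 0 R) := hg₁diff.analyticOnNhd isOpen_ball
        -- pointwise identity of integrands on the sphere
        have hptwise : ∀ z ∈ sphere (0:ℂ) r,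
            z ^ c * (deriv g z / g z)
              = (k : ℂ) * ((z - ζ)⁻¹ * z ^ c) + z ^ c * (deriv g₁ z / g₁ z) := by
          intro z hz
          have hzζ : z ≠ ζ := by
            intro h; subst h
            exact (mem_ball.1 hζball).ne (mem_sphere.1 hz)
          have hzR : z ∈ ball (0:ℂ) R := hsphere_ball hz
          have hgd : HasDerivAt g₁ (deriv g₁ z) z :=
            (hg₁diff.differentiableAt (isOpen_ball.mem_nhds hzR)).hasDerivAt
          have hpd : HasDerivAt (fun y : ℂ => (y - ζ)^k) ((k:ℂ) * (z - ζ)^(k-1) * 1) z :=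
            ((hasDerivAt_id z).sub_const ζ).pow k
          have hgder : deriv g z = (k:ℂ) * (z - ζ)^(k-1) * g₁ z + (z - ζ)^k * deriv g₁ z := by
            have : g = fun y => (y - ζ)^k * g₁ y := funext hfac
            rw [this]
            rw [(hpd.fun_mul hgd).deriv]
            ring
          have hznz : g z ≠ 0 := hsp z hz
          have hg₁nz : g₁ z ≠ 0 := hg₁sp z hz
          have hpow : (z - ζ)^k ≠ 0 := pow_ne_zero _ (sub_ne_zero.2 hzζ)
          have hsub0 : z - ζ ≠ 0 := sub_ne_zero.2 hzζ
          rw [hgder, hfac z]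
          have hkk : (z - ζ)^(k-1) * (z-ζ) = (z-ζ)^k := by
            rw [← pow_succ]
            congr 1
            omega
          field_simp
          ring_nf
          rw [← hkk]
          ring
        rw [circleIntegral.integral_congr hr.le (fun z hz => hptwise z hz)]
        have hint1 : CircleIntegrable (fun z => (k : ℂ) * ((z - ζ)⁻¹ * z ^ c)) 0 r := by
          apply ContinuousOn.circleIntegrable hr.le
          apply ContinuousOn.mul continuousOn_const
          apply ContinuousOn.mul _ (continuousOn_pow c)
          apply ContinuousOn.inv₀ ((continuousOn_id.sub continuousOn_const))
          intro z hz
          exact sub_ne_zero.2 fun h => (mem_ball.1 hζball).ne (mem_sphere.1 ((show z = ζ from h) ▸ hz))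
        have hint2 : CircleIntegrable (fun z => z ^ c * (deriv g₁ z / g₁ z)) 0 r := by
          apply ContinuousOn.circleIntegrable hr.le
          apply ContinuousOn.mul (continuousOn_pow c)
          exact ContinuousOn.div (han₁.deriv.continuousOn.mono hsphere_ball)
            (hg₁diff.continuousOn.mono hsphere_ball) hg₁sp
        rw [circleIntegral_add' hint1 hint2]
        rw [circleIntegral.integral_const_mul]
        have hcauchy : (∮ z in C((0:ℂ), r), (z - ζ)⁻¹ * z ^ c) = (2 * Real.pi * I) * ζ ^ c := by
          have := DifferentiableOn.circleIntegral_sub_inv_smul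
            (f := fun z : ℂ => z ^ c) (c := 0) (R := r) (w := ζ)
            ((differentiable_pow c).differentiableOn) hζball
          simpa [smul_eq_mul] using this
        rw [hcauchy, hM₁int c]
        simp only [Multiset.map_add, Multiset.map_replicate, Multiset.sum_add,
          Multiset.sum_replicate, nsmul_eq_mul]
        ring


lemma constOfReal {T : Set ℂ} (hT : IsOpen T) (hTc : IsPreconnected T) {a : ℂ → ℂ}
    (ha : DifferentiableOn ℂ a T) (hreal : ∀ t ∈ T, (a t).im = 0) {t₀ : ℂ} (h₀ : t₀ ∈ T) :
    ∀ t ∈ T, a t = a t₀ := by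
  have han : AnalyticOnNhd ℂ a T := ha.analyticOnNhd hT
  rcases (han t₀ h₀).eventually_constant_or_nhds_le_map_nhds with h | h
  · have heq : a =ᶠ[nhds t₀] (fun _ => a t₀) := h
    have := han.eqOn_of_preconnected_of_eventuallyEq
      (g := fun _ => a t₀) analyticOnNhd_const hTc h₀ heq
    exact fun t ht => this ht
  · exfalso
    have hmem : {w : ℂ | w.im = 0} ∈ Filter.map a (nhds t₀) := by
      rw [Filter.mem_map]
      filter_upwards [hT.mem_nhds h₀] with t ht
      exact hreal t ht
    have hnb := h hmem
    rw [Metric.mem_nhds_iff] at hnb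
    obtain ⟨ε, hε, hball⟩ := hnb
    have hmem2 : a t₀ + I * (ε/2 : ℝ) ∈ ball (a t₀) ε := by
      rw [mem_ball, dist_eq_norm]
      simp only [add_sub_cancel_left]
      rw [norm_mul, Complex.norm_I, one_mul, Complex.norm_real, Real.norm_eq_abs,
        abs_of_pos (by positivity)]
      linarith
    have him := hball hmem2
    simp only [Set.mem_setOf_eq, Complex.add_im, Complex.mul_im, Complex.I_re, Complex.I_im,
      Complex.ofReal_re, Complex.ofReal_im] at him
    have h0 : (a t₀).im = 0 := hreal t₀ h₀
    rw [h0] at him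
    simp at him
    linarith

lemma multiset_im_sum (M : Multiset ℂ) (h : ∀ x ∈ M, x.im = 0) : M.sum.im = 0 := by
  induction M using Multiset.induction with
  | empty => simp
  | cons a s ih =>
    simp only [Multiset.sum_cons, Complex.add_im]
    rw [h a (Multiset.mem_cons_self a s), ih (fun x hx => h x (Multiset.mem_cons_of_mem hx))]
    ring

lemma multiset_sq_re_sum : ∀ (M : Multiset ℂ), (∀ x ∈ M, x.im = 0) →
    ((M.map (· ^ 2)).sum).re = (M.map (fun x => x.re ^ 2)).sum := by
  intro M
  induction M using Multiset.induction with
  | empty => simp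
  | cons a s ih =>
    intro h
    simp only [Multiset.map_cons, Multiset.sum_cons, Complex.add_re]
    rw [ih (fun x hx => h x (Multiset.mem_cons_of_mem hx))]
    have ha : a.im = 0 := h a (Multiset.mem_cons_self a s)
    have : (a ^ 2).re = a.re ^ 2 := by
      rw [pow_two, Complex.mul_re, ha]
      ring
    rw [this]

lemma multiset_sq_zero (M : Multiset ℂ) (him : ∀ x ∈ M, x.im = 0)
    (hsum : (M.map (· ^ 2)).sum = 0) : ∀ x ∈ M, x = 0 := by
  intro x hx
  have h1 : ((M.map (· ^ 2)).sum).re = 0 := by rw [hsum]; rfl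
  rw [multiset_sq_re_sum M him] at h1
  have h2 : ∀ y ∈ M.map (fun x => x.re ^ 2), (0:ℝ) ≤ y := by
    intro y hy
    obtain ⟨z, _, rfl⟩ := Multiset.mem_map.1 hy
    positivity
  have h3 : x.re ^ 2 ≤ (M.map (fun x => x.re ^ 2)).sum :=
    Multiset.single_le_sum h2 _ (Multiset.mem_map_of_mem _ hx)
  have h4 : x.re ^ 2 = 0 := le_antisymm (h1 ▸ h3) (by positivity)
  have h5 : x.re = 0 := by
    nlinarith [sq_nonneg x.re]
  exact Complex.ext h5 (him x hx)

lemma multiset_pow_zero_sum (M : Multiset ℂ) :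
    (M.map (· ^ 0)).sum = (Multiset.card M : ℂ) := by
  induction M using Multiset.induction with
  | empty => simp
  | cons a s ih => simp [ih, add_comm]

/-- Uniqueness of the complex hypervariety through a smooth point of a
Levi-flat hypersurface `{Im z₁ = 0}`: if `f` is holomorphic near `0`, `f(0)=0`
and `{f = 0} ⊆ {Im z₁ = 0}`, then `f` vanishes on `{z₁ = 0}` near `0`. -/
theorem stmt_18 (n : ℕ) (U : Set (ℂ × (Fin n → ℂ))) (hU : IsOpen U)
    (h0 : (0 : ℂ × (Fin n → ℂ)) ∈ U)
    (f : ℂ × (Fin n → ℂ) → ℂ) (hf : DifferentiableOn ℂ f U)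
    (hf0 : f 0 = 0)
    (hsub : ∀ z ∈ U, f z = 0 → z.1.im = 0) :
    ∃ V ∈ nhds (0 : ℂ × (Fin n → ℂ)), ∀ z ∈ V, z.1 = 0 → f z = 0 := by
  classical
  obtain ⟨ρ', hρ', hρball⟩ := Metric.isOpen_iff.1 hU 0 h0
  set ρ : ℝ := ρ' / 2 with hρdef
  have hρ0 : 0 < ρ := by positivity
  have hUsub : ∀ (z₁ : ℂ) (w : Fin n → ℂ), ‖z₁‖ ≤ ρ → ‖w‖ ≤ ρ → (z₁, w) ∈ U := by
    intro z₁ w h1 h2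
    apply hρball
    rw [mem_ball, Prod.dist_eq]
    apply max_lt
    · show dist z₁ (0:ℂ) < ρ'
      rw [dist_zero_right]
      exact lt_of_le_of_lt h1 (by linarith)
    · show dist w (0 : Fin n → ℂ) < ρ'
      rw [dist_zero_right]
      exact lt_of_le_of_lt h2 (by linarith)
  set ψ : ℂ → ℂ := fun z => f (z, 0) with hψdef
  have hψdiff : DifferentiableOn ℂ ψ (ball 0 ρ) := by
    apply DifferentiableOn.comp hf
      (differentiable_id.prodMk (differentiable_const 0)).differentiableOn
    intro z hz
    exact hUsub z 0 (le_of_lt (mem_ball_zero_iff.1 hz)) (by simp [hρ0.le])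
  have hψ0 : ψ 0 = 0 := by exact hf0
  have hψne : ¬ (∀ᶠ z in nhds (0:ℂ), ψ z = 0) := by
    intro h
    rw [Metric.eventually_nhds_iff] at h
    obtain ⟨s, hs, h⟩ := h
    set z : ℂ := I * ((min s ρ) / 2 : ℝ) with hzdef
    have hmin : 0 < min s ρ := lt_min hs hρ0
    have hznorm : ‖z‖ = (min s ρ) / 2 := by
      rw [hzdef, norm_mul, Complex.norm_I, one_mul, Complex.norm_real, Real.norm_eq_abs,
        abs_of_pos (by positivity)]
    have hz0 : ψ z = 0 := by
      apply h
      rw [dist_zero_right, hznorm]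
      have := min_le_left s ρ
      linarith
    have hzU : ((z, 0) : ℂ × (Fin n → ℂ)) ∈ U := hUsub z 0
      (by rw [hznorm]; linarith [min_le_right s ρ]) (by simp [hρ0.le])
    have h2 := hsub (z, 0) hzU hz0
    simp only [hzdef] at h2
    rw [Complex.mul_im, Complex.I_re, Complex.I_im, Complex.ofReal_re, Complex.ofReal_im] at h2
    simp at h2
    linarith
  have hψan : AnalyticAt ℂ ψ 0 :=
    (hψdiff.analyticOnNhd isOpen_ball) 0 (mem_ball_self hρ0)
  have hψiso := hψan.eventually_eq_zero_or_eventually_ne_zero.resolve_left hψne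
  rw [eventually_nhdsWithin_iff, Metric.eventually_nhds_iff] at hψiso
  obtain ⟨r₁, hr₁, hψr₁⟩ := hψiso
  set r : ℝ := min (r₁ / 2) (ρ / 2) with hrdef
  have hr0 : 0 < r := lt_min (by positivity) (by positivity)
  have hrρ : r < ρ := lt_of_le_of_lt (min_le_right _ _) (by linarith)
  have hrr₁ : r < r₁ := lt_of_le_of_lt (min_le_left _ _) (by linarith)
  -- ψ has no zeros on the punctured closed ball of radius r
  have hψnz : ∀ z : ℂ, ‖z‖ ≤ r → z ≠ 0 → ψ z ≠ 0 := by
    intro z hz hzne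
    apply hψr₁
    · rw [dist_zero_right]
      exact lt_of_le_of_lt hz hrr₁
    · simpa using hzne
  have main : ∀ v : Fin n → ℂ, ‖v‖ ≤ ρ / 2 → f (0, v) = 0 := by
    intro v hv
    set F : ℂ → ℂ → ℂ := fun t z => f (z, t • v) with hFdef
    have htv : ∀ t : ℂ, ‖t‖ ≤ 2 → ‖t • v‖ ≤ ρ := by
      intro t ht
      rw [norm_smul]
      calc ‖t‖ * ‖v‖ ≤ 2 * (ρ/2) := mul_le_mul ht hv (norm_nonneg _) (by norm_num)
        _ = ρ := by ring
    have hFdiff : ∀ t : ℂ, ‖t‖ ≤ 2 → DifferentiableOn ℂ (F t) (ball 0 ρ) := by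
      intro t ht
      apply DifferentiableOn.comp hf
        (differentiable_id.prodMk (differentiable_const (t • v))).differentiableOn
      intro z hz
      exact hUsub z (t • v) (le_of_lt (mem_ball_zero_iff.1 hz)) (htv t ht)
    have hWcont : ContinuousOn (fun q : ℂ × ℂ => f (q.1, q.2 • v))
        (closedBall (0:ℂ) ρ ×ˢ closedBall (0:ℂ) 2) := by
      apply hf.continuousOn.comp
        (continuous_fst.prodMk (continuous_snd.smul continuous_const)).continuousOn
      rintro ⟨z, t⟩ ⟨hz, ht⟩
      exact hUsub z (t • v) (mem_closedBall_zero_iff.1 hz)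
        (htv t (mem_closedBall_zero_iff.1 ht))
    have hF0 : F 0 = ψ := by
      funext z
      simp [hFdef, hψdef]
    -- find δ
    obtain ⟨δ, hδ0, hδ1, hδnz⟩ :
        ∃ δ : ℝ, 0 < δ ∧ δ ≤ 1 ∧ ∀ t : ℂ, ‖t‖ < δ → ∀ z ∈ sphere (0:ℂ) r, F t z ≠ 0 := by
      set B : Set (ℂ × ℂ) := (sphere (0:ℂ) r ×ˢ closedBall (0:ℂ) 1) ∩
        (fun q : ℂ × ℂ => f (q.1, q.2 • v)) ⁻¹' {0} with hBdef
      have hBclosed : IsClosed B := by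
        apply ContinuousOn.preimage_isClosed_of_isClosed
          (hWcont.mono (Set.prod_mono (sphere_subset_closedBall.trans
            (closedBall_subset_closedBall hrρ.le)) (closedBall_subset_closedBall one_le_two)))
          (IsClosed.prod isClosed_sphere isClosed_closedBall) isClosed_singleton
      have hBcompact : IsCompact B :=
        ((isCompact_sphere (0:ℂ) r).prod (isCompact_closedBall (0:ℂ) 1)).of_isClosed_subset
          hBclosed Set.inter_subset_left
      have hBim : IsCompact (Prod.snd '' B) := hBcompact.image continuous_snd
      have h0nim : (0:ℂ) ∉ Prod.snd '' B := by
        rintro ⟨⟨z, t⟩, ⟨⟨hz, _⟩, hz0⟩, rfl⟩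
        simp only [Set.mem_preimage, Set.mem_singleton_iff] at hz0
        have hznorm : ‖z‖ = r := mem_sphere_zero_iff_norm.1 hz
        refine hψnz z hznorm.le (fun h => ?_) ?_
        · rw [h, norm_zero] at hznorm
          exact hr0.ne hznorm
        · rw [hψdef]
          simpa using hz0
      obtain ⟨δ', hδ'0, hδ'ball⟩ := Metric.isOpen_iff.1 hBim.isClosed.isOpen_compl 0 h0nim
      refine ⟨min δ' 1, lt_min hδ'0 one_pos, min_le_right _ _, ?_⟩
      intro t ht z hz hFtz
      have htB : ((z, t) : ℂ × ℂ) ∈ B := by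
        refine ⟨⟨hz, ?_⟩, ?_⟩
        · rw [mem_closedBall_zero_iff]
          exact le_of_lt (lt_of_lt_of_le ht (min_le_right _ _))
        · simp only [Set.mem_preimage, Set.mem_singleton_iff]
          exact hFtz
      have : t ∈ Prod.snd '' B := ⟨(z, t), htB, rfl⟩
      exact (hδ'ball (by
        rw [mem_ball, dist_zero_right]
        exact lt_of_lt_of_le ht (min_le_left _ _))) this
    set δ₂ : ℝ := δ / 2 with hδ₂def
    have hδ₂0 : 0 < δ₂ := by positivity
    have hδ₂δ : δ₂ < δ := by simp only [hδ₂def]; linarith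
    set T : Set ℂ := ball (0:ℂ) δ₂ with hTdef
    have hTopen : IsOpen T := isOpen_ball
    have hTconn : IsPreconnected T := (convex_ball (0:ℂ) δ₂).isPreconnected
    have h0T : (0:ℂ) ∈ T := mem_ball_self hδ₂0
    have hTnorm : ∀ t ∈ T, ‖t‖ ≤ 2 := by
      intro t ht
      have := mem_ball_zero_iff.1 ht
      have hδ2 : δ₂ ≤ 1 := by simp only [hδ₂def]; linarith
      linarith
    have hTδ : ∀ t ∈ T, ‖t‖ < δ := fun t ht => lt_trans (mem_ball_zero_iff.1 ht) hδ₂δ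
    set ρ₀ : ℝ := (ρ - r) / 2 with hρ₀def
    have hρ₀0 : 0 < ρ₀ := by simp only [hρ₀def]; linarith
    have hzρ₀ : ∀ z : ℂ, ‖z‖ ≤ r → closedBall z ρ₀ ⊆ ball (0:ℂ) ρ := by
      intro z hz y hy
      rw [mem_ball_zero_iff]
      calc ‖y‖ = ‖y - z + z‖ := by ring_nf
        _ ≤ ‖y - z‖ + ‖z‖ := norm_add_le _ _
        _ ≤ ρ₀ + r := add_le_add (by rwa [← dist_eq_norm, ← mem_closedBall]) hz
        _ < ρ := by simp only [hρ₀def]; linarith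
    have hcm_mem : ∀ (z : ℂ), ‖z‖ ≤ r → ∀ θ : ℝ, ‖circleMap z ρ₀ θ‖ ≤ ρ := by
      intro z hz θ
      have h1 : circleMap z ρ₀ θ ∈ sphere z ρ₀ := circleMap_mem_sphere z hρ₀0.le θ
      have h2 : circleMap z ρ₀ θ ∈ closedBall z ρ₀ := sphere_subset_closedBall h1
      exact le_of_lt (mem_ball_zero_iff.1 (hzρ₀ z hz h2))
    set D : ℂ × ℂ → ℂ := fun p => Complex.cderiv ρ₀ (F p.2) p.1 with hDdef
    have hD_eq : ∀ z : ℂ, ‖z‖ ≤ r → ∀ t : ℂ, ‖t‖ ≤ 2 → D (z, t) = deriv (F t) z := by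
      intro z hz t ht
      exact Complex.cderiv_eq_deriv isOpen_ball (hFdiff t ht) hρ₀0 (hzρ₀ z hz)
    have hFslice : ∀ ξ : ℂ, ‖ξ‖ ≤ ρ → DifferentiableOn ℂ (fun t => f (ξ, t • v)) T := by
      intro ξ hξ
      apply DifferentiableOn.comp hf
        ((differentiable_const ξ).prodMk (differentiable_id.smul_const v)).differentiableOn
      intro t ht
      exact hUsub ξ (t • v) hξ (htv t (hTnorm t ht))
    have hD_t : ∀ z : ℂ, ‖z‖ ≤ r → DifferentiableOn ℂ (fun t => D (z, t)) T := by
      intro z hz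
      have hrfl : (fun t => D (z, t)) = fun t => (2 * Real.pi * I : ℂ)⁻¹ •
          ∫ θ in (0:ℝ)..(2*Real.pi), deriv (circleMap z ρ₀) θ •
            (((circleMap z ρ₀ θ - z) ^ 2)⁻¹ • F t (circleMap z ρ₀ θ)) := rfl
      rw [hrfl]
      apply DifferentiableOn.fun_const_smul
      apply lemC hTopen
      · simp only [deriv_circleMap, circleMap_sub_center]
        apply ContinuousOn.fun_smul
        · exact (((continuous_circleMap 0 ρ₀).comp continuous_fst).mul
            continuous_const).continuousOn
        apply ContinuousOn.fun_smul
        · apply Continuous.continuousOn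
          apply Continuous.inv₀ (((continuous_circleMap 0 ρ₀).comp continuous_fst).pow 2)
          intro p
          exact pow_ne_zero 2 (circleMap_ne_center hρ₀0.ne')
        · apply hWcont.comp (((continuous_circleMap z ρ₀).comp
            continuous_fst).prodMk continuous_snd).continuousOn
          rintro ⟨θ, t⟩ ⟨-, ht⟩
          constructor
          · rw [mem_closedBall_zero_iff]
            exact hcm_mem z hz θ
          · rw [mem_closedBall_zero_iff]
            exact hTnorm t ht
      · intro θ
        apply DifferentiableOn.fun_const_smul
        apply DifferentiableOn.fun_const_smul
        exact hFslice (circleMap z ρ₀ θ) (hcm_mem z hz θ)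
    have hScompact : IsCompact (closedBall (0:ℂ) r ×ˢ closedBall (0:ℂ) δ₂) :=
      (isCompact_closedBall _ _).prod (isCompact_closedBall _ _)
    have hδ₂2 : ∀ t : ℂ, ‖t‖ ≤ δ₂ → ‖t‖ ≤ 2 := by
      intro t ht
      have hδ2 : δ₂ ≤ 1 := by simp only [hδ₂def]; linarith
      linarith
    have hD_c : ContinuousOn D (closedBall (0:ℂ) r ×ˢ closedBall (0:ℂ) δ₂) := by
      have hrfl : D = fun x : ℂ × ℂ => (2 * Real.pi * I : ℂ)⁻¹ •
          ∫ θ in (0:ℝ)..(2*Real.pi), deriv (circleMap x.1 ρ₀) θ •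
            (((circleMap x.1 ρ₀ θ - x.1) ^ 2)⁻¹ • F x.2 (circleMap x.1 ρ₀ θ)) := rfl
      rw [hrfl]
      apply ContinuousOn.fun_const_smul
      apply lemD hScompact
      simp only [deriv_circleMap, circleMap_sub_center]
      have hcmj : Continuous (fun p : ℝ × (ℂ × ℂ) => circleMap p.2.1 ρ₀ p.1) := by
        have : (fun p : ℝ × (ℂ × ℂ) => circleMap p.2.1 ρ₀ p.1)
            = fun p => p.2.1 + (ρ₀ : ℂ) * Complex.exp ((p.1 : ℂ) * I) := by
          funext p
          simp [circleMap]
        rw [this]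
        apply Continuous.add (continuous_fst.comp continuous_snd)
        apply Continuous.mul continuous_const
        exact Complex.continuous_exp.comp
          ((Complex.continuous_ofReal.comp continuous_fst).mul continuous_const)
      apply ContinuousOn.fun_smul
      · exact (((continuous_circleMap 0 ρ₀).comp continuous_fst).mul
          continuous_const).continuousOn
      apply ContinuousOn.fun_smul
      · apply Continuous.continuousOn
        apply Continuous.inv₀ (((continuous_circleMap 0 ρ₀).comp continuous_fst).pow 2)
        intro p
        exact pow_ne_zero 2 (circleMap_ne_center hρ₀0.ne')
      · apply hWcont.comp (hcmj.prodMk (continuous_snd.comp continuous_snd)).continuousOn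
        rintro ⟨θ, z, t⟩ ⟨-, hz, ht⟩
        constructor
        · rw [mem_closedBall_zero_iff]
          exact hcm_mem z (mem_closedBall_zero_iff.1 hz) θ
        · rw [mem_closedBall_zero_iff]
          exact hδ₂2 t (mem_closedBall_zero_iff.1 ht)
    set aInt : ℕ → ℂ → ℂ := fun c t => ∮ z in C((0:ℂ), r), z ^ c * (D (z, t) / F t z) with haInt
    have hsp_norm : ∀ z ∈ sphere (0:ℂ) r, ‖z‖ = r := fun z hz => mem_sphere_zero_iff_norm.1 hz
    have haval : ∀ (c : ℕ) (t : ℂ), ‖t‖ ≤ 2 →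
        aInt c t = ∮ z in C((0:ℂ), r), z ^ c * (deriv (F t) z / F t z) := by
      intro c t ht
      apply circleIntegral.integral_congr hr0.le
      intro z hz
      show z ^ c * (D (z, t) / F t z) = z ^ c * (deriv (F t) z / F t z)
      rw [hD_eq z (hsp_norm z hz).le t ht]
    have haDiff : ∀ c : ℕ, DifferentiableOn ℂ (aInt c) T := by
      intro c
      have hrfl : aInt c = fun t => ∫ θ in (0:ℝ)..(2*Real.pi),
          deriv (circleMap 0 r) θ • ((circleMap 0 r θ) ^ c *
            (D (circleMap 0 r θ, t) / F t (circleMap 0 r θ))) := rfl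
      rw [hrfl]
      apply lemC hTopen
      · simp only [deriv_circleMap]
        apply ContinuousOn.fun_smul
        · exact (((continuous_circleMap 0 r).comp continuous_fst).mul
            continuous_const).continuousOn
        apply ContinuousOn.mul
        · exact (((continuous_circleMap 0 r).comp continuous_fst).pow c).continuousOn
        apply ContinuousOn.div
        · apply hD_c.comp (((continuous_circleMap 0 r).comp
            continuous_fst).prodMk continuous_snd).continuousOn
          rintro ⟨θ, t⟩ ⟨-, ht⟩
          constructor
          · exact sphere_subset_closedBall (circleMap_mem_sphere 0 hr0.le θ)
          · exact ball_subset_closedBall ht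
        · apply hWcont.comp (((continuous_circleMap 0 r).comp
            continuous_fst).prodMk continuous_snd).continuousOn
          rintro ⟨θ, t⟩ ⟨-, ht⟩
          refine ⟨?_, ?_⟩
          · show circleMap 0 r θ ∈ closedBall (0:ℂ) ρ
            rw [mem_closedBall_zero_iff, hsp_norm _ (circleMap_mem_sphere 0 hr0.le θ)]
            exact hrρ.le
          · show t ∈ closedBall (0:ℂ) 2
            rw [mem_closedBall_zero_iff]
            exact hTnorm t ht
        · rintro ⟨θ, t⟩ ⟨-, ht⟩
          exact hδnz t (hTδ t ht) _ (circleMap_mem_sphere 0 hr0.le θ)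
      · intro θ
        apply DifferentiableOn.fun_const_smul
        apply DifferentiableOn.const_mul
        apply DifferentiableOn.div
        · exact hD_t (circleMap 0 r θ) (hsp_norm _ (circleMap_mem_sphere 0 hr0.le θ)).le
        · apply hFslice
          rw [hsp_norm _ (circleMap_mem_sphere 0 hr0.le θ)]
          exact hrρ.le
        · intro t ht
          exact hδnz t (hTδ t ht) _ (circleMap_mem_sphere 0 hr0.le θ)
    -- per-parameter application of the argument principle
    have hMex : ∀ t ∈ T, ∃ M : Multiset ℂ,
        (∀ ζ ∈ M, ζ ∈ ball (0:ℂ) r ∧ F t ζ = 0) ∧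
        (∀ z ∈ closedBall (0:ℂ) r, F t z = 0 → z ∈ M) ∧
        (∀ c : ℕ, aInt c t = (2 * Real.pi * I) * ((M.map (· ^ c)).sum)) := by
      intro t ht
      have ht2 : ‖t‖ ≤ 2 := hTnorm t ht
      obtain ⟨M, h1, h2, h3⟩ := argPrinciple hr0 hrρ
        ({z : ℂ | z ∈ closedBall (0:ℂ) r ∧ F t z = 0}.ncard) (F t)
        (hFdiff t ht2) (fun z hz => hδnz t (hTδ t ht) z hz) le_rfl
      exact ⟨M, h1, h2, fun c => by rw [haval c t ht2]; exact h3 c⟩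
    have hMreal : ∀ t ∈ T, ∀ ζ : ℂ, ζ ∈ ball (0:ℂ) r → F t ζ = 0 → ζ.im = 0 := by
      intro t ht ζ hζ h0'
      exact hsub (ζ, t • v)
        (hUsub ζ (t • v) (le_of_lt (lt_of_lt_of_le (mem_ball_zero_iff.1 hζ) hrρ.le))
          (htv t (hTnorm t ht))) h0'
    have h2πI : (2 * Real.pi * I : ℂ) ≠ 0 := by
      simp [Real.pi_ne_zero, Complex.I_ne_zero, Complex.ofReal_ne_zero]
    have hconst : ∀ c : ℕ, (∀ t ∈ T, ((aInt c t) / (2 * Real.pi * I)).im = 0) →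
        ∀ t ∈ T, aInt c t = aInt c 0 := by
      intro c hre t ht
      have hb := constOfReal hTopen hTconn ((haDiff c).div_const (2 * Real.pi * I)) hre h0T t ht
      have := congrArg (· * (2 * Real.pi * I)) hb
      simpa [div_mul_cancel₀ _ h2πI] using this
    have hre0 : ∀ t ∈ T, ((aInt 0 t) / (2 * Real.pi * I)).im = 0 := by
      intro t ht
      obtain ⟨M, h1, h2, h3⟩ := hMex t ht
      rw [h3 0, mul_comm, mul_div_assoc, div_self h2πI, mul_one]
      apply multiset_im_sum
      intro x hx
      obtain ⟨ζ, hζ, rfl⟩ := Multiset.mem_map.1 hx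
      simp
    have hre2 : ∀ t ∈ T, ((aInt 2 t) / (2 * Real.pi * I)).im = 0 := by
      intro t ht
      obtain ⟨M, h1, h2, h3⟩ := hMex t ht
      rw [h3 2, mul_comm, mul_div_assoc, div_self h2πI, mul_one]
      apply multiset_im_sum
      intro x hx
      obtain ⟨ζ, hζ, rfl⟩ := Multiset.mem_map.1 hx
      have hζim : ζ.im = 0 := hMreal t ht ζ (h1 ζ hζ).1 (h1 ζ hζ).2
      rw [pow_two, Complex.mul_im, hζim]
      ring
    -- values at the center t = 0
    obtain ⟨M₀, hM₀1, hM₀2, hM₀3⟩ := hMex 0 h0T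
    have hM₀elt : ∀ ζ ∈ M₀, ζ = 0 := by
      intro ζ hζ
      obtain ⟨hb, h0'⟩ := hM₀1 ζ hζ
      by_contra hne
      apply hψnz ζ (le_of_lt (mem_ball_zero_iff.1 hb)) hne
      rw [← hF0]
      exact h0'
    have ha20 : aInt 2 0 = 0 := by
      rw [hM₀3 2]
      have hz : (M₀.map (· ^ 2)).sum = 0 := by
        apply Multiset.sum_eq_zero
        intro x hx
        obtain ⟨ζ, hζ, rfl⟩ := Multiset.mem_map.1 hx
        rw [hM₀elt ζ hζ]
        simp
      rw [hz, mul_zero]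
    have hcard0 : (0:ℂ) ∈ M₀ := by
      apply hM₀2 0 (mem_closedBall_self hr0.le)
      rw [hF0]
      exact hψ0
    have ha00 : aInt 0 0 = (2 * Real.pi * I) * ((Multiset.card M₀ : ℕ) : ℂ) := by
      rw [hM₀3 0, multiset_pow_zero_sum]
    -- conclusion for every t in T
    have hzero : ∀ t ∈ T, F t 0 = 0 := by
      intro t ht
      obtain ⟨M, h1, h2, h3⟩ := hMex t ht
      have e0 : aInt 0 t = aInt 0 0 := hconst 0 hre0 t ht
      have e2 : aInt 2 t = aInt 2 0 := hconst 2 hre2 t ht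
      have hcM : ((Multiset.card M : ℕ) : ℂ) = ((Multiset.card M₀ : ℕ) : ℂ) := by
        have h30 := h3 0
        rw [multiset_pow_zero_sum] at h30
        have : (2 * Real.pi * I) * ((Multiset.card M : ℕ) : ℂ)
            = (2 * Real.pi * I) * ((Multiset.card M₀ : ℕ) : ℂ) := by
          rw [← h30, e0, ha00]
        exact mul_left_cancel₀ h2πI this
      have hMne : M ≠ 0 := by
        intro h
        rw [h] at hcM
        simp only [Multiset.card_zero, Nat.cast_zero] at hcM
        have : Multiset.card M₀ = 0 := by exact_mod_cast hcM.symm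
        rw [Multiset.card_eq_zero] at this
        rw [this] at hcard0
        simp at hcard0
      have hsq : (M.map (· ^ 2)).sum = 0 := by
        have h32 := h3 2
        rw [e2, ha20] at h32
        rcases mul_eq_zero.1 h32.symm with h | h
        · exact absurd h h2πI
        · exact h
      have hall := multiset_sq_zero M
        (fun ζ hζ => hMreal t ht ζ (h1 ζ hζ).1 (h1 ζ hζ).2) hsq
      obtain ⟨ζ, hζ⟩ := Multiset.exists_mem_of_ne_zero hMne
      have hζ0 : ζ = 0 := hall ζ hζ
      have := (h1 ζ hζ).2
      rwa [hζ0] at this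
    -- analytic continuation along the disc of radius 2
    have hγdiff : DifferentiableOn ℂ (fun t : ℂ => f (0, t • v)) (ball (0:ℂ) 2) := by
      apply DifferentiableOn.comp hf
        ((differentiable_const (0:ℂ)).prodMk (differentiable_id.smul_const v)).differentiableOn
      intro t ht
      exact hUsub 0 (t • v) (by simp [hρ0.le]) (htv t (le_of_lt (mem_ball_zero_iff.1 ht)))
    have hev : (fun t : ℂ => f (0, t • v)) =ᶠ[nhds (0:ℂ)] 0 := by
      filter_upwards [hTopen.mem_nhds h0T] with t ht
      exact hzero t ht
    have heq := (hγdiff.analyticOnNhd isOpen_ball).eqOn_zero_of_preconnected_of_eventuallyEq_zero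
      (convex_ball (0:ℂ) 2).isPreconnected (mem_ball_self two_pos) hev
    have h1mem : (1:ℂ) ∈ ball (0:ℂ) 2 := by
      rw [mem_ball_zero_iff]
      norm_num
    have := heq h1mem
    simpa [one_smul] using this
  refine ⟨ball 0 (ρ/2), ball_mem_nhds _ (by positivity), ?_⟩
  rintro ⟨z1, w⟩ hz h1
  simp only at h1
  subst h1
  have hw : ‖w‖ ≤ ρ / 2 := by
    have := mem_ball.1 hz
    rw [Prod.dist_eq] at this
    have h2 : dist w (0 : Fin n → ℂ) < ρ / 2 := lt_of_le_of_lt (le_max_right _ _) this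
    rw [dist_zero_right] at h2
    exact h2.le
  exact main w hw
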